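/- For every infinite group Γ and every positive integer n, there exists a sequence g_1, g_2, ..., g_n of elements of Γ such that no product of a nonempty subset of distinct indices, taken in any order and with each factor being either g_i or g_i^{-1}, equals the identity. -/

import Mathlib

open List

/-- The signed word product. -/
def W {Γ : Type*} [Group Γ] {n : ℕ} (g : Fin n → Γ) (l : List (Fin n × Bool)) : Γ :=
  (l.map fun p => if p.2 then g p.1 else (g p.1)⁻¹).prod

lemma down_spec {Γ : Type*} [Group Γ] {n : ℕ} (g : Fin n → Γ) (x : Γ)
    (s : List (Fin (n + 1) × Bool)) (hs : ∀ p ∈ s, p.1 ≠ Fin.last n) :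
    ∃ s' : List (Fin n × Bool), W g s' = W (Fin.snoc g x) s ∧
      (s'.map Prod.fst).map Fin.castSucc = s.map Prod.fst := by
  induction s with
  | nil => exact ⟨[], rfl, rfl⟩
  | cons p t ih =>
    obtain ⟨t', ht1, ht2⟩ := ih (fun q hq => hs q (List.mem_cons_of_mem _ hq))
    have hp : p.1 ≠ Fin.last n := hs p List.mem_cons_self
    refine ⟨(p.1.castPred hp, p.2) :: t', ?_, ?_⟩
    · simp only [W, List.map_cons, List.prod_cons] at ht1 ⊢
      rw [ht1]
      congr 1
      have : (Fin.snoc g x : Fin (n+1) → Γ) p.1 = g (p.1.castPred hp) := by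
        conv_lhs => rw [← Fin.castSucc_castPred p.1 hp]
        rw [Fin.snoc_castSucc]
      rw [this]
    · simp only [List.map_cons, ht2, Fin.castSucc_castPred]

lemma aux_dissoc (Γ : Type*) [Group Γ] [Infinite Γ] (n : ℕ) :
    ∃ g : Fin n → Γ, ∀ l : List (Fin n × Bool), l ≠ [] →
      (l.map Prod.fst).Nodup → W g l ≠ 1 := by
  induction n with
  | zero =>
    refine ⟨Fin.elim0, fun l hl _ => ?_⟩
    cases l with
    | nil => exact absurd rfl hl
    | cons a t => exact a.1.elim0
  | succ n ih =>
    obtain ⟨g, hg⟩ := ih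
    have hL : {l : List (Fin n × Bool) | l.length ≤ n}.Finite := List.finite_length_le _ n
    set L : Set (List (Fin n × Bool)) := {l | l.length ≤ n} with hLdef
    set Bad : Set Γ :=
      ((fun q : List (Fin n × Bool) × List (Fin n × Bool) =>
          (W g q.1)⁻¹ * (W g q.2)⁻¹) '' (L ×ˢ L)) ∪
      ((fun q : List (Fin n × Bool) × List (Fin n × Bool) =>
          W g q.2 * W g q.1) '' (L ×ˢ L)) with hBadDef
    have hBad : Bad.Finite :=
      ((hL.prod hL).image _).union ((hL.prod hL).image _)
    obtain ⟨x, hx⟩ := hBad.infinite_compl.nonempty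
    refine ⟨Fin.snoc g x, fun l hne hnd h1 => ?_⟩
    by_cases hlast : Fin.last n ∈ l.map Prod.fst
    · -- the new index occurs: split the list
      obtain ⟨p, hpmem, hp1⟩ := List.mem_map.mp hlast
      obtain ⟨s, t, rfl⟩ := List.append_of_mem hpmem
      have hnd' : ((s.map Prod.fst) ++ p.1 :: (t.map Prod.fst)).Nodup := by
        simpa using hnd
      rw [List.nodup_append] at hnd'
      obtain ⟨hs_nd, hpt_nd, hdisj⟩ := hnd'
      have hpt : p.1 ∉ t.map Prod.fst := (List.nodup_cons.mp hpt_nd).1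
      have ht_nd : (t.map Prod.fst).Nodup := (List.nodup_cons.mp hpt_nd).2
      have hps : p.1 ∉ s.map Prod.fst := fun hm => hdisj _ hm _ List.mem_cons_self rfl
      have hs_avoid : ∀ q ∈ s, q.1 ≠ Fin.last n := by
        intro q hq hq1
        exact hps (hp1 ▸ hq1 ▸ List.mem_map_of_mem (f := Prod.fst) hq)
      have ht_avoid : ∀ q ∈ t, q.1 ≠ Fin.last n := by
        intro q hq hq1
        exact hpt (hp1 ▸ hq1 ▸ List.mem_map_of_mem (f := Prod.fst) hq)
      obtain ⟨s', hs1, hs2⟩ := down_spec g x s hs_avoid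
      obtain ⟨t', ht1, ht2⟩ := down_spec g x t ht_avoid
      have hsL : s' ∈ L := by
        have : (s'.map Prod.fst).Nodup := by
          have : ((s'.map Prod.fst).map Fin.castSucc).Nodup := hs2 ▸ hs_nd
          exact this.of_map _
        have hlen : s'.length ≤ n := by
          have h1 := this.length_le_card
          simpa using h1
        exact hlen
      have htL : t' ∈ L := by
        have : (t'.map Prod.fst).Nodup := by
          have : ((t'.map Prod.fst).map Fin.castSucc).Nodup := ht2 ▸ ht_nd
          exact this.of_map _
        have hlen : t'.length ≤ n := by
          have h1 := this.length_le_card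
          simpa using h1
        exact hlen
      -- compute the product
      have hgp : (Fin.snoc g x : Fin (n+1) → Γ) p.1 = x := by rw [hp1, Fin.snoc_last]
      have hprod : W (Fin.snoc g x) (s ++ p :: t) =
          W g s' * (if p.2 then x else x⁻¹) * W g t' := by
        simp only [W] at hs1 ht1 ⊢
        simp only [List.map_append, List.map_cons, List.prod_append, List.prod_cons, hgp]
        rw [← hs1, ← ht1, mul_assoc]
      rw [hprod] at h1
      have h2 : W g s' * (if p.2 then x else x⁻¹) = (W g t')⁻¹ :=
        mul_eq_one_iff_eq_inv.mp h1
      have hxeq : (if p.2 then x else x⁻¹) = (W g s')⁻¹ * (W g t')⁻¹ :=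
        eq_inv_mul_iff_mul_eq.mpr h2
      have hxBad : x ∈ Bad := by
        cases hb : p.2 with
        | true =>
          rw [hb, if_pos rfl] at hxeq
          exact Or.inl ⟨(s', t'), ⟨hsL, htL⟩, hxeq.symm⟩
        | false =>
          rw [hb, if_neg (by simp)] at hxeq
          have : x = W g t' * W g s' := by
            have := congrArg (·⁻¹) hxeq
            simpa [mul_inv_rev] using this
          exact Or.inr ⟨(s', t'), ⟨hsL, htL⟩, this.symm⟩
      exact hx hxBad
    · -- the new index does not occur
      have havoid : ∀ q ∈ l, q.1 ≠ Fin.last n := by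
        intro q hq hq1
        exact hlast (hq1 ▸ List.mem_map_of_mem (f := Prod.fst) hq)
      obtain ⟨l', hl1, hl2⟩ := down_spec g x l havoid
      have hne' : l' ≠ [] := by
        rintro rfl
        apply hne
        have hml : l.map Prod.fst = [] := by simpa using hl2.symm
        simpa using hml
      have hnd2 : (l'.map Prod.fst).Nodup := by
        have : ((l'.map Prod.fst).map Fin.castSucc).Nodup := hl2 ▸ hnd
        exact this.of_map _
      exact hg l' hne' hnd2 (hl1 ▸ h1)

theorem exists_dissociated_family (Γ : Type*) [Group Γ] [Infinite Γ]
    (n : ℕ) (hn : 0 < n) :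
    ∃ g : Fin n → Γ, ∀ l : List (Fin n × Bool), l ≠ [] →
      (l.map Prod.fst).Nodup →
      (l.map fun p => if p.2 then g p.1 else (g p.1)⁻¹).prod ≠ 1 := by
  obtain ⟨g, hg⟩ := aux_dissoc Γ n
  exact ⟨g, fun l h1 h2 => hg l h1 h2⟩
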